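/- Let B be a prime Banach algebra over ℝ, let H₁ and H₂ be non-empty open subsets of B, let d : B → B be a non-injective derivation, and let F : B → B be a continuous generalized derivation associated with d. Suppose that for every (x, y) ∈ H₁ × H₂ there exist positive integers p = p(x,y) ≥ 1 and q = q(x,y) ≥ 1 such that F(xᵖyᵠ) + xᵖ∘yᵠ ∈ Z(B). Then B is commutative or d(Z(B)) = {0}. -/

import Mathlib

open Metric Set Finset Polynomial

section AuxLemmas

variable {B : Type*}

/-- Coefficient extraction: a `B`-valued polynomial function of a real variable that
vanishes identically has all coefficients zero. -/
lemma aux_poly_coeff_zero [NormedRing B] [NormedAlgebra ℝ B]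
    (n : ℕ) (a : ℕ → B) (h : ∀ t : ℝ, ∑ j ∈ Finset.range n, t ^ j • a j = 0) :
    ∀ j < n, a j = 0 := by
  intro j hj
  apply NormedSpace.eq_zero_of_forall_dual_eq_zero ℝ
  intro f
  set P : Polynomial ℝ := ∑ i ∈ Finset.range n, Polynomial.C (f (a i)) * Polynomial.X ^ i with hP
  have hPeval : ∀ t : ℝ, P.eval t = 0 := by
    intro t
    have h1 := congrArg f (h t)
    rw [map_sum, map_zero] at h1
    rw [hP, Polynomial.eval_finset_sum]
    rw [← h1]
    refine Finset.sum_congr rfl fun i _ => ?_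
    rw [map_smul, smul_eq_mul, Polynomial.eval_mul, Polynomial.eval_C, Polynomial.eval_pow,
      Polynomial.eval_X, mul_comm]
  have hP0 : P = 0 := Polynomial.funext fun r => by rw [hPeval r, Polynomial.eval_zero]
  have hcoeff := congrArg (fun Q : Polynomial ℝ => Q.coeff j) hP0
  simp only [hP, Polynomial.finset_sum_coeff, Polynomial.coeff_C_mul, Polynomial.coeff_X_pow,
    Polynomial.coeff_zero] at hcoeff
  rwa [Finset.sum_eq_single j (fun i _ hij => by simp [Ne.symm hij])
    (fun hjn => absurd (Finset.mem_range.mpr hj) hjn), if_pos rfl, mul_one] at hcoeff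

/-- In a prime ring, a central nilpotent element is zero. -/
lemma aux_central_nilpotent_eq_zero [Ring B]
    (hprime : ∀ x y : B, (∀ z : B, x * z * y = 0) → x = 0 ∨ y = 0)
    (z : B) (hz : ∀ b : B, z * b = b * z) :
    ∀ n : ℕ, z ^ n = 0 → z = 0 := by
  intro n
  induction n with
  | zero =>
    intro h
    rw [pow_zero] at h
    calc z = z * 1 := (mul_one z).symm
    _ = z * 0 := by rw [h]
    _ = 0 := mul_zero z
  | succ n ih =>
    intro h
    rcases hprime z (z ^ n) (fun s => by
      rw [hz s, mul_assoc, ← pow_succ', h, mul_zero]) with h1 | h2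
    · rw [h1]
    · exact ih h2

end AuxLemmas

/-- Theorem: a prime real Banach algebra with a continuous generalized derivation `F`
associated with a non-injective derivation `d` satisfying
`F(x^p y^q) + x^p ∘ y^q ∈ Z(B)` on a product of nonempty open sets is commutative
or `d` vanishes on the center. -/
theorem prime_banach_of_genDer_mul_add_anticomm
    {B : Type*} [NormedRing B] [NormedAlgebra ℝ B] [CompleteSpace B]
    (hprime : ∀ x y : B, (∀ z : B, x * z * y = 0) → x = 0 ∨ y = 0)
    (H₁ H₂ : Set B) (hH₁ : H₁.Nonempty) (hH₂ : H₂.Nonempty)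
    (hH₁o : IsOpen H₁) (hH₂o : IsOpen H₂)
    (d : B → B) (hdadd : ∀ x y : B, d (x + y) = d x + d y)
    (hdmul : ∀ x y : B, d (x * y) = d x * y + x * d y)
    (hdnoninj : ¬ Function.Injective d)
    (F : B → B) (hFcont : Continuous F)
    (hFadd : ∀ x y : B, F (x + y) = F x + F y)
    (hFmul : ∀ x y : B, F (x * y) = F x * y + x * d y)
    (hmain : ∀ x ∈ H₁, ∀ y ∈ H₂, ∃ p q : ℕ, 0 < p ∧ 0 < q ∧
      ∀ b : B, (F (x ^ p * y ^ q) + (x ^ p * y ^ q + y ^ q * x ^ p)) * b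
        = b * (F (x ^ p * y ^ q) + (x ^ p * y ^ q + y ^ q * x ^ p))) :
    (∀ x y : B, x * y = y * x) ∨ (∀ z : B, (∀ b : B, z * b = b * z) → d z = 0) := by
  classical
  obtain ⟨x₀, hx₀⟩ := hH₁
  obtain ⟨y₀, hy₀⟩ := hH₂
  set z₀ : B × B := (x₀, y₀) with hz₀def
  have hOopen : IsOpen (H₁ ×ˢ H₂) := hH₁o.prod hH₂o
  have hz₀mem : z₀ ∈ H₁ ×ˢ H₂ := ⟨hx₀, hy₀⟩
  -- the closed sets indexed by pairs of exponents
  set T : ℕ × ℕ → Set (B × B) := fun pq =>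
    {xy : B × B | ∀ b : B,
      (F (xy.1 ^ (pq.1 + 1) * xy.2 ^ (pq.2 + 1)) + (xy.1 ^ (pq.1 + 1) * xy.2 ^ (pq.2 + 1)
        + xy.2 ^ (pq.2 + 1) * xy.1 ^ (pq.1 + 1))) * b
      = b * (F (xy.1 ^ (pq.1 + 1) * xy.2 ^ (pq.2 + 1)) + (xy.1 ^ (pq.1 + 1) * xy.2 ^ (pq.2 + 1)
        + xy.2 ^ (pq.2 + 1) * xy.1 ^ (pq.1 + 1)))} with hTdef
  have hTclosed : ∀ pq : ℕ × ℕ, IsClosed (T pq) := by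
    intro pq
    have heq : T pq = ⋂ b : B, {xy : B × B |
        (F (xy.1 ^ (pq.1 + 1) * xy.2 ^ (pq.2 + 1)) + (xy.1 ^ (pq.1 + 1) * xy.2 ^ (pq.2 + 1)
          + xy.2 ^ (pq.2 + 1) * xy.1 ^ (pq.1 + 1))) * b
        = b * (F (xy.1 ^ (pq.1 + 1) * xy.2 ^ (pq.2 + 1)) + (xy.1 ^ (pq.1 + 1) * xy.2 ^ (pq.2 + 1)
          + xy.2 ^ (pq.2 + 1) * xy.1 ^ (pq.1 + 1)))} := by
      ext xy; simp [hTdef, Set.mem_iInter]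
    rw [heq]
    refine isClosed_iInter fun b => ?_
    have h1 : Continuous fun xy : B × B => xy.1 ^ (pq.1 + 1) * xy.2 ^ (pq.2 + 1) :=
      (continuous_fst.pow _).mul (continuous_snd.pow _)
    have h2 : Continuous fun xy : B × B =>
        F (xy.1 ^ (pq.1 + 1) * xy.2 ^ (pq.2 + 1)) + (xy.1 ^ (pq.1 + 1) * xy.2 ^ (pq.2 + 1)
          + xy.2 ^ (pq.2 + 1) * xy.1 ^ (pq.1 + 1)) :=
      (hFcont.comp h1).add (h1.add ((continuous_snd.pow _).mul (continuous_fst.pow _)))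
    exact isClosed_eq (h2.mul continuous_const) (continuous_const.mul h2)
  have hcover : ∀ u ∈ H₁ ×ˢ H₂, ∃ pq : ℕ × ℕ, u ∈ T pq := by
    intro u hu
    obtain ⟨p, q, hp, hq, hpq⟩ := hmain u.1 hu.1 u.2 hu.2
    refine ⟨(p - 1, q - 1), fun b => ?_⟩
    have hp' : p - 1 + 1 = p := Nat.succ_pred_eq_of_pos hp
    have hq' : q - 1 + 1 = q := Nat.succ_pred_eq_of_pos hq
    simpa only [hp', hq'] using hpq b
  -- Baire category argument on a closed ball inside H₁ ×ˢ H₂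
  obtain ⟨r, hr, hball⟩ := Metric.isOpen_iff.mp hOopen z₀ hz₀mem
  have hr2 : (0 : ℝ) < r / 2 := by linarith
  set K : Set (B × B) := Metric.closedBall z₀ (r / 2) with hKdef
  have hKsub : K ⊆ H₁ ×ˢ H₂ := fun u hu => hball (by
    rw [Metric.mem_ball]
    calc dist u z₀ ≤ r / 2 := Metric.mem_closedBall.mp hu
    _ < r := by linarith)
  haveI : CompleteSpace K := Metric.isClosed_closedBall.completeSpace_coe
  haveI : Nonempty K := ⟨⟨z₀, Metric.mem_closedBall_self (le_of_lt hr2)⟩⟩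
  have hcoverK : (⋃ pq : ℕ × ℕ, ((↑) : K → B × B) ⁻¹' T pq) = Set.univ := by
    ext u
    simp only [Set.mem_iUnion, Set.mem_univ, iff_true, Set.mem_preimage]
    exact hcover u.1 (hKsub u.2)
  obtain ⟨pq, hne⟩ := nonempty_interior_of_iUnion_of_closed
    (fun pq => (hTclosed pq).preimage continuous_subtype_val) hcoverK
  obtain ⟨u, hu⟩ := hne
  rw [mem_interior_iff_mem_nhds, mem_nhds_subtype] at hu
  obtain ⟨s, hs, hssub⟩ := hu
  obtain ⟨ε, hε, hballs⟩ := Metric.mem_nhds_iff.mp hs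
  set W : Set (B × B) := Metric.ball (u : B × B) ε ∩ Metric.ball z₀ (r / 2) with hWdef
  have hWopen : IsOpen W := isOpen_ball.inter isOpen_ball
  have hWsub : W ⊆ T pq := by
    rintro v ⟨hv1, hv2⟩
    have hvK : v ∈ K := Metric.ball_subset_closedBall hv2
    exact hssub (show (⟨v, hvK⟩ : K) ∈ Subtype.val ⁻¹' s from hballs hv1)
  have hWne : W.Nonempty := by
    have humem : (u : B × B) ∈ closure (Metric.ball z₀ (r / 2)) := by
      rw [closure_ball z₀ (ne_of_gt hr2)]
      exact u.2
    exact mem_closure_iff.mp humem _ isOpen_ball (Metric.mem_ball_self hε)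
  obtain ⟨w₀, hw₀⟩ := hWne
  obtain ⟨m, n⟩ := pq
  -- Analytic continuation: the identity holds for all x, y
  set Flin : B →L[ℝ] B := (AddMonoidHom.mk' F hFadd).toRealLinearMap hFcont with hFlindef
  have hFeq : ∀ v : B, Flin v = F v := fun v => rfl
  have hkey : ∀ x y b : B,
      (F (x ^ (m + 1) * y ^ (n + 1)) + (x ^ (m + 1) * y ^ (n + 1)
        + y ^ (n + 1) * x ^ (m + 1))) * b
      = b * (F (x ^ (m + 1) * y ^ (n + 1)) + (x ^ (m + 1) * y ^ (n + 1)
        + y ^ (n + 1) * x ^ (m + 1))) := by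
    intro x y b
    set g : B × B → B := fun xy =>
      (F (xy.1 ^ (m + 1) * xy.2 ^ (n + 1)) + (xy.1 ^ (m + 1) * xy.2 ^ (n + 1)
        + xy.2 ^ (n + 1) * xy.1 ^ (m + 1))) * b
      - b * (F (xy.1 ^ (m + 1) * xy.2 ^ (n + 1)) + (xy.1 ^ (m + 1) * xy.2 ^ (n + 1)
        + xy.2 ^ (n + 1) * xy.1 ^ (m + 1))) with hgdef
    have hfst : AnalyticOnNhd ℝ (fun xy : B × B => xy.1) Set.univ := fun v _ => analyticAt_fst
    have hsnd : AnalyticOnNhd ℝ (fun xy : B × B => xy.2) Set.univ := fun v _ => analyticAt_snd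
    have h1 : AnalyticOnNhd ℝ
        (fun xy : B × B => xy.1 ^ (m + 1) * xy.2 ^ (n + 1)) Set.univ :=
      (hfst.pow (m + 1)).mul (hsnd.pow (n + 1))
    have hF1 : AnalyticOnNhd ℝ
        (fun xy : B × B => F (xy.1 ^ (m + 1) * xy.2 ^ (n + 1))) Set.univ := by
      have := (Flin.analyticOnNhd Set.univ).comp h1 (Set.mapsTo_univ _ _)
      simpa [hFeq, Function.comp_def] using this
    have h2 : AnalyticOnNhd ℝ (fun xy : B × B =>
        F (xy.1 ^ (m + 1) * xy.2 ^ (n + 1)) + (xy.1 ^ (m + 1) * xy.2 ^ (n + 1)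
          + xy.2 ^ (n + 1) * xy.1 ^ (m + 1))) Set.univ :=
      hF1.add (h1.add ((hsnd.pow (n + 1)).mul (hfst.pow (m + 1))))
    have hganal : AnalyticOnNhd ℝ g Set.univ :=
      (h2.mul analyticOnNhd_const).sub (analyticOnNhd_const.mul h2)
    have hgW : ∀ v ∈ W, g v = 0 := by
      intro v hv
      have hveq := hWsub hv b
      rw [hgdef]
      simp only [hveq, sub_self]
    have hev : g =ᶠ[nhds w₀] 0 :=
      Filter.eventuallyEq_of_mem (hWopen.mem_nhds hw₀) hgW
    have hzero := hganal.eqOn_zero_of_preconnected_of_eventuallyEq_zero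
      isPreconnected_univ (Set.mem_univ w₀) hev
    have hxy := hzero (Set.mem_univ (x, y))
    simp only [hgdef, Pi.zero_apply, sub_eq_zero] at hxy
    exact hxy
  
  -- Algebraic part
  by_cases hcomm : ∀ x y : B, x * y = y * x
  · exact Or.inl hcomm
  right
  intro z hz
  -- d of a central element is central
  have hdz_cen : ∀ w : B, (∀ b : B, w * b = b * w) → ∀ b : B, d w * b = b * d w := by
    intro w hw b
    have h1 := hdmul w b
    rw [hw b, hdmul b w, hw (d b)] at h1
    -- h1 : d b * w + b * d w = d w * b + d b * w
    rw [add_comm (d w * b) (d b * w)] at h1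
    exact (add_left_cancel h1).symm
  -- powers of central elements are central
  have hzn : ∀ k : ℕ, ∀ b : B, z ^ k * b = b * z ^ k := by
    intro k
    induction k with
    | zero => intro b; simp
    | succ k ih =>
      intro b
      rw [pow_succ, mul_assoc, hz b, ← mul_assoc, ih b, mul_assoc]
  set w : B := d (z ^ (n + 1)) with hwdef
  have hzq_cen : ∀ b : B, z ^ (n + 1) * b = b * z ^ (n + 1) := hzn (n + 1)
  have hw_cen : ∀ b : B, w * b = b * w := hdz_cen _ hzq_cen
  -- key substitution: y^q * w is central for all y
  have hyqw : ∀ y b : B, (y ^ (n + 1) * w) * b = b * (y ^ (n + 1) * w) := by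
    intro y b
    have hyz := hkey 1 (y * z) b
    have hmulpow : (y * z) ^ (n + 1) = y ^ (n + 1) * z ^ (n + 1) := by
      have hc : Commute y z := (hz y).symm
      exact hc.mul_pow (n + 1)
    rw [one_pow, one_mul, mul_one, hmulpow, hFmul (y ^ (n + 1)) (z ^ (n + 1)), ← hwdef] at hyz
    -- hyz : (F(y^q)*z^q + y^q*w + (y^q*z^q + y^q*z^q)) * b = b * (...)
    set G : B := F (y ^ (n + 1)) + (y ^ (n + 1) + y ^ (n + 1)) with hGdef
    set c : B := z ^ (n + 1) with hcdef
    have hA : (G * c + y ^ (n + 1) * w) * b = b * (G * c + y ^ (n + 1) * w) := by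
      have hrw : G * c + y ^ (n + 1) * w
          = F (y ^ (n + 1)) * c + y ^ (n + 1) * w
            + (y ^ (n + 1) * c + y ^ (n + 1) * c) := by
        rw [hGdef]; noncomm_ring
      rw [hrw]
      exact hyz
    have hG_cen : ∀ b' : B, G * b' = b' * G := by
      intro b'
      have := hkey 1 y b'
      rw [one_pow, one_mul, mul_one] at this
      exact this
    have hGc : (G * c) * b = b * (G * c) := by
      rw [mul_assoc, hzq_cen b, ← mul_assoc, hG_cen b, mul_assoc]
    have h5 : (G * c) * b + (y ^ (n + 1) * w) * b
        = b * (G * c) + b * (y ^ (n + 1) * w) := by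
      rw [← add_mul, ← mul_add]
      exact hA
    rw [hGc] at h5
    exact add_left_cancel h5
  -- Show w = 0
  have hw0 : w = 0 := by
    by_contra hw
    -- all q-th powers are central
    have hq_cen : ∀ v b : B, v ^ (n + 1) * b = b * v ^ (n + 1) := by
      intro v b
      have ha : ∀ s : B, (v ^ (n + 1) * b - b * v ^ (n + 1)) * s * w = 0 := by
        intro s
        have haw : (v ^ (n + 1) * b - b * v ^ (n + 1)) * w = 0 := by
          rw [sub_mul, mul_assoc, ← hw_cen b, ← mul_assoc, hyqw v b, mul_assoc, sub_self]
        rw [mul_assoc, ← hw_cen s, ← mul_assoc, haw, zero_mul]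
      rcases hprime _ _ ha with h1 | h2
      · exact sub_eq_zero.mp h1
      · exact absurd h2 hw
    -- extract the linear coefficient: everything is central, contradiction
    have hall : ∀ x y : B, x * y = y * x := by
      intro x b
      set a : ℕ → B := fun k =>
        (x ^ (n + 1 - k) * ((n + 1).choose k : B)) * b
          - b * (x ^ (n + 1 - k) * ((n + 1).choose k : B)) with hadef
      have hsum : ∀ t : ℝ, ∑ k ∈ Finset.range (n + 2), t ^ k • a k = 0 := by
        intro t
        have hcomm1 : Commute (t • (1 : B)) x := by
          show t • (1 : B) * x = x * (t • 1)
          rw [smul_mul_assoc, one_mul, mul_smul_comm, mul_one]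
        have hexp : (t • (1 : B) + x) ^ (n + 1)
            = ∑ k ∈ Finset.range (n + 2), t ^ k • (x ^ (n + 1 - k) * ((n + 1).choose k : B)) := by
          rw [Commute.add_pow hcomm1]
          refine Finset.sum_congr rfl fun k _ => ?_
          rw [_root_.smul_pow, one_pow, smul_mul_assoc, one_mul, smul_mul_assoc]
        have hv := hq_cen (t • (1 : B) + x) b
        rw [hexp] at hv
        calc ∑ k ∈ Finset.range (n + 2), t ^ k • a k
            = (∑ k ∈ Finset.range (n + 2),
                t ^ k • (x ^ (n + 1 - k) * ((n + 1).choose k : B))) * b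
              - b * ∑ k ∈ Finset.range (n + 2),
                t ^ k • (x ^ (n + 1 - k) * ((n + 1).choose k : B)) := by
              rw [Finset.sum_mul, Finset.mul_sum, ← Finset.sum_sub_distrib]
              refine Finset.sum_congr rfl fun k _ => ?_
              rw [hadef]
              rw [smul_sub, smul_mul_assoc, mul_smul_comm]
          _ = 0 := by rw [hv, sub_self]
      have han := aux_poly_coeff_zero (n + 2) a hsum n (by omega)
      rw [hadef] at han
      simp only [show n + 1 - n = 1 by omega, pow_one] at han
      have hchoose : ((n + 1).choose n : B) = ((n + 1 : ℕ) : B) := by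
        rw [Nat.choose_succ_self_right]
      rw [hchoose] at han
      -- han : (x * ↑(n+1)) * b - b * (x * ↑(n+1)) = 0
      have hcast : ∀ v : B, v * ((n + 1 : ℕ) : B) = ((n + 1 : ℝ)) • v := by
        intro v
        rw [← map_natCast (algebraMap ℝ B) (n + 1), Algebra.algebraMap_eq_smul_one,
          mul_smul_comm, mul_one]
        norm_num
      rw [hcast, smul_mul_assoc, mul_smul_comm, ← smul_sub] at han
      have hne : ((n + 1 : ℝ)) ≠ 0 := by positivity
      have := (smul_eq_zero.mp han).resolve_left hne
      exact sub_eq_zero.mp this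
    exact hcomm hall
  -- From w = d (z^(n+1)) = 0, conclude d z = 0
  have hdzc := hdz_cen z hz
  have hpow : ∀ k : ℕ, d (z ^ (k + 1)) = (k + 1) • (z ^ k * d z) := by
    intro k
    induction k with
    | zero => simp
    | succ k ih =>
      have h := hdmul (z ^ (k + 1)) z
      rw [← pow_succ, ih, smul_mul_assoc, mul_assoc, hdzc z, ← mul_assoc, ← pow_succ,
        ← succ_nsmul] at h
      exact h
  have hzw : z ^ n * d z = 0 := by
    have h := hpow n
    rw [← hwdef, hw0] at h
    have h2 : ((n + 1 : ℕ) : ℝ) • (z ^ n * d z) = 0 := by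
      rw [Nat.cast_smul_eq_nsmul]
      exact h.symm
    have hne : ((n + 1 : ℕ) : ℝ) ≠ 0 := by positivity
    exact (smul_eq_zero.mp h2).resolve_left hne
  rcases hprime (z ^ n) (d z) (fun s => by
      rw [mul_assoc, ← hdzc s, ← mul_assoc, hzw, zero_mul]) with h1 | h2
  · have hz0 : z = 0 := aux_central_nilpotent_eq_zero hprime z hz n h1
    have hd0 : d 0 = 0 := by
      have h := hdadd 0 0
      rw [add_zero] at h
      exact (left_eq_add.mp h)
    rw [hz0]
    exact hd0
  · exact h2
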